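/- There exists a constant K > 0 such that for every s ≥ 3, | ∫_3^s sin( t / log t ) dt | ≤ K · log s. -/

import Mathlib

open Real Set intervalIntegral MeasureTheory

noncomputable def gg (t : ℝ) : ℝ := (Real.log t)^2 / (Real.log t - 1)
noncomputable def gg' (t : ℝ) : ℝ :=
  Real.log t * (Real.log t - 2) / (t * (Real.log t - 1)^2)
noncomputable def FF (t : ℝ) : ℝ := -Real.cos (t / Real.log t) * gg t

lemma log_ge {t : ℝ} (ht : 3 ≤ t) : (1.05 : ℝ) ≤ Real.log t := by
  have h3 : Real.exp 1.05 ≤ 3 := by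
    have h1 : Real.exp 1.05 = Real.exp 1 * Real.exp 0.05 := by
      rw [← Real.exp_add]; norm_num
    have h2 : Real.exp 1 < 2.7182818286 := Real.exp_one_lt_d9
    have h4 : Real.exp 0.05 ≤ 20/19 := by
      have h5 := Real.add_one_le_exp (-0.05 : ℝ)
      rw [Real.exp_neg] at h5
      have h6 := Real.exp_pos (0.05 : ℝ)
      nlinarith [mul_le_mul_of_nonneg_left h5 h6.le, mul_inv_cancel₀ (ne_of_gt h6)]
    nlinarith [Real.exp_pos (1 : ℝ)]
  have : (1.05 : ℝ) ≤ Real.log 3 := (Real.le_log_iff_exp_le (by norm_num)).2 h3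
  exact this.trans (Real.log_le_log (by norm_num) ht)

lemma gg_nonneg {t : ℝ} (ht : 3 ≤ t) : 0 ≤ gg t :=
  div_nonneg (sq_nonneg _) (by linarith [log_ge ht])

lemma gg_le {t : ℝ} (ht : 3 ≤ t) : gg t ≤ 21 * Real.log t := by
  have hl := log_ge ht
  rw [gg, div_le_iff₀ (by linarith)]
  nlinarith

lemma hgg_deriv {t : ℝ} (ht : 3 ≤ t) : HasDerivAt gg (gg' t) t := by
  have ht0 : t ≠ 0 := by intro h; rw [h] at ht; norm_num at ht
  have hl := log_ge ht
  have hne : Real.log t - 1 ≠ 0 := by intro h; nlinarith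
  have h1 : HasDerivAt Real.log t⁻¹ t := Real.hasDerivAt_log ht0
  have h2 : HasDerivAt (fun t : ℝ => (Real.log t)^2)
      ((2 : ℕ) * (Real.log t)^(2-1) * t⁻¹) t := h1.pow 2
  have h3 : HasDerivAt (fun t : ℝ => Real.log t - 1) t⁻¹ t := h1.sub_const 1
  have h4 := h2.div h3 hne
  refine h4.congr_deriv ?_
  rw [gg']
  field_simp
  ring

lemma hFF_deriv {t : ℝ} (ht : 3 ≤ t) :
    HasDerivAt FF (Real.sin (t / Real.log t) - Real.cos (t / Real.log t) * gg' t) t := by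
  have ht0 : t ≠ 0 := by intro h; rw [h] at ht; norm_num at ht
  have hl := log_ge ht
  have hlne : Real.log t ≠ 0 := by intro h; nlinarith
  have hne : Real.log t - 1 ≠ 0 := by intro h; nlinarith
  have h1 : HasDerivAt Real.log t⁻¹ t := Real.hasDerivAt_log ht0
  have hphi : HasDerivAt (fun t : ℝ => t / Real.log t)
      ((1 * Real.log t - t * t⁻¹) / (Real.log t)^2) t := (hasDerivAt_id t).div h1 hlne
  have hcos := hphi.cos
  have h5 := (hcos.neg).mul (hgg_deriv ht)
  refine h5.congr_deriv ?_
  rw [gg', gg, Pi.neg_apply]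
  field_simp
  ring

lemma contOn_log : ContinuousOn Real.log (Set.Ici (3:ℝ)) := fun t ht =>
  (Real.continuousAt_log (by rintro rfl; norm_num at ht)).continuousWithinAt

lemma contOn_gg' : ContinuousOn gg' (Set.Ici (3:ℝ)) := by
  apply ContinuousOn.div
  · exact contOn_log.mul (contOn_log.sub continuousOn_const)
  · exact continuousOn_id.mul ((contOn_log.sub continuousOn_const).pow 2)
  · intro t ht
    have hl := log_ge ht
    have ht0 : (0:ℝ) < t := by have : (3:ℝ) ≤ t := ht; linarith
    exact mul_ne_zero (ne_of_gt ht0) (pow_ne_zero 2 (by intro h; nlinarith))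

lemma contOn_phi : ContinuousOn (fun t : ℝ => Real.sin (t / Real.log t)) (Set.Ici (3:ℝ)) := by
  apply Real.continuous_sin.comp_continuousOn
  apply ContinuousOn.div continuousOn_id contOn_log
  intro t ht
  have hl := log_ge ht
  intro h; nlinarith

lemma contOn_cg : ContinuousOn (fun t : ℝ => Real.cos (t / Real.log t) * gg' t) (Set.Ici (3:ℝ)) := by
  apply ContinuousOn.mul _ contOn_gg'
  apply Real.continuous_cos.comp_continuousOn
  apply ContinuousOn.div continuousOn_id contOn_log
  intro t ht
  have hl := log_ge ht
  intro h; nlinarith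

lemma intble {f : ℝ → ℝ} (hf : ContinuousOn f (Set.Ici (3:ℝ))) {a b : ℝ}
    (ha : 3 ≤ a) (hb : 3 ≤ b) :
    IntervalIntegrable f MeasureTheory.volume a b := by
  apply (hf.mono ?_).intervalIntegrable
  intro x hx
  rcases Set.mem_uIcc.1 hx with h | h <;> exact Set.mem_Ici.2 (by linarith [h.1])

lemma ftc_gg {a b : ℝ} (ha : 3 ≤ a) (hb : 3 ≤ b) :
    ∫ t in a..b, gg' t = gg b - gg a :=
  intervalIntegral.integral_eq_sub_of_hasDerivAt
    (fun t htm => hgg_deriv (by rcases Set.mem_uIcc.1 htm with h | h <;> linarith [h.1]))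
    (intble contOn_gg' ha hb)

lemma three_le_exp_two : (3:ℝ) ≤ Real.exp 2 := by
  have h := Real.exp_one_gt_d9
  have : Real.exp 2 = Real.exp 1 * Real.exp 1 := by rw [← Real.exp_add]; norm_num
  nlinarith

lemma gg'_nonpos {t : ℝ} (h3 : 3 ≤ t) (h2 : t ≤ Real.exp 2) : gg' t ≤ 0 := by
  have ht0 : (0:ℝ) < t := by linarith
  have hl2 : Real.log t ≤ 2 := (Real.log_le_iff_le_exp ht0).2 h2
  have hl := log_ge h3
  apply div_nonpos_of_nonpos_of_nonneg
  · nlinarith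
  · positivity

lemma gg'_nonneg {t : ℝ} (h2 : Real.exp 2 ≤ t) : 0 ≤ gg' t := by
  have h3 : (3:ℝ) ≤ t := le_trans three_le_exp_two h2
  have ht0 : (0:ℝ) < t := by linarith
  have hl2 : (2:ℝ) ≤ Real.log t := (Real.le_log_iff_exp_le ht0).2 h2
  apply div_nonneg
  · nlinarith
  · positivity

lemma neg_part {a b : ℝ} (ha : 3 ≤ a) (hab : a ≤ b) (hb : b ≤ Real.exp 2) :
    ∫ t in a..b, |gg' t| = gg a - gg b := by
  have h1 : ∫ t in a..b, |gg' t| = ∫ t in a..b, -gg' t := by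
    apply intervalIntegral.integral_congr
    intro t htm
    rw [Set.uIcc_of_le hab] at htm
    exact abs_of_nonpos (gg'_nonpos (by linarith [htm.1]) (by linarith [htm.2]))
  rw [h1, intervalIntegral.integral_neg, ftc_gg ha (by linarith)]
  ring

lemma var_bound {s : ℝ} (hs : 3 ≤ s) : ∫ t in (3:ℝ)..s, |gg' t| ≤ gg 3 + gg s := by
  rcases le_or_gt s (Real.exp 2) with hcase | hcase
  · rw [neg_part le_rfl hs hcase]
    linarith [gg_nonneg hs]
  · have he3 := three_le_exp_two
    have hes : Real.exp 2 ≤ s := hcase.le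
    have hsplit := intervalIntegral.integral_add_adjacent_intervals
      (f := fun t => |gg' t|) (μ := volume) (a := 3) (b := Real.exp 2) (c := s)
      (intble contOn_gg'.abs le_rfl he3) (intble contOn_gg'.abs he3 (by linarith))
    have h1 : ∫ t in (3:ℝ)..Real.exp 2, |gg' t| = gg 3 - gg (Real.exp 2) :=
      neg_part le_rfl he3 le_rfl
    have h2 : ∫ t in (Real.exp 2)..s, |gg' t| = gg s - gg (Real.exp 2) := by
      have : ∫ t in (Real.exp 2)..s, |gg' t| = ∫ t in (Real.exp 2)..s, gg' t := by
        apply intervalIntegral.integral_congr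
        intro t htm
        rw [Set.uIcc_of_le hes] at htm
        exact abs_of_nonneg (gg'_nonneg htm.1)
      rw [this, ftc_gg he3 (by linarith)]
    have hgnn := gg_nonneg three_le_exp_two
    linarith [hsplit, h1, h2]

lemma FF_abs {t : ℝ} (ht : 3 ≤ t) : |FF t| ≤ gg t := by
  rw [FF, abs_mul, abs_neg, abs_of_nonneg (gg_nonneg ht)]
  exact mul_le_of_le_one_left (gg_nonneg ht) (Real.abs_cos_le_one _)

/-- There is a constant `K > 0` such that
`|∫_3^s sin(t / log t) dt| ≤ K log s` for every `s ≥ 3`. -/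
theorem stmt_18 :
    ∃ K : ℝ, 0 < K ∧ ∀ s : ℝ, 3 ≤ s →
      |∫ t in (3 : ℝ)..s, Real.sin (t / Real.log t)| ≤ K * Real.log s := by
  refine ⟨84, by norm_num, fun s hs => ?_⟩
  have h3 : (3:ℝ) ≤ 3 := le_rfl
  have hIsin := intble contOn_phi h3 hs
  have hIcg := intble contOn_cg h3 hs
  have key : ∫ t in (3:ℝ)..s, Real.sin (t / Real.log t)
      = (FF s - FF 3) + ∫ t in (3:ℝ)..s, Real.cos (t / Real.log t) * gg' t := by
    have h1 : ∫ t in (3:ℝ)..s,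
        (Real.sin (t / Real.log t) - Real.cos (t / Real.log t) * gg' t) = FF s - FF 3 :=
      intervalIntegral.integral_eq_sub_of_hasDerivAt
        (fun t htm => hFF_deriv (by rcases Set.mem_uIcc.1 htm with h | h <;> linarith [h.1]))
        (hIsin.sub hIcg)
    have h2 := intervalIntegral.integral_sub hIsin hIcg
    rw [h2] at h1
    linarith
  have hI : |∫ t in (3:ℝ)..s, Real.cos (t / Real.log t) * gg' t| ≤ gg 3 + gg s := by
    refine (intervalIntegral.abs_integral_le_integral_abs hs).trans ?_
    refine le_trans (intervalIntegral.integral_mono_on hs (intble contOn_cg.abs h3 hs)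
      (intble contOn_gg'.abs h3 hs) ?_) (var_bound hs)
    intro x hx
    rw [abs_mul]
    exact mul_le_of_le_one_left (abs_nonneg _) (Real.abs_cos_le_one _)
  have hFs := FF_abs hs
  have hF3 := FF_abs h3
  have hg3 := gg_le h3
  have hgs := gg_le hs
  have hls : Real.log 3 ≤ Real.log s := Real.log_le_log (by norm_num) hs
  have hl3 : (1.05:ℝ) ≤ Real.log 3 := log_ge h3
  rw [key]
  have htr1 := abs_add_le (FF s - FF 3) (∫ t in (3:ℝ)..s, Real.cos (t / Real.log t) * gg' t)
  have htr2 := abs_sub (FF s) (FF 3)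
  have h1 := abs_nonneg (FF s)
  have h2 := abs_nonneg (FF 3)
  nlinarith [htr1, htr2]
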